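/- P-independence via iterated llcm: let K be a division ring with endomorphism S and S-derivation D, x₁,…,xₙ ∈ K, and pⱼ := the monic least left common multiple of t−x₁,…,t−xⱼ in K[t;S,D] (p₀ := 1). Then deg(pₙ) = n (i.e. {x₁,…,xₙ} is P-independent) if and only if pᵢ(x_{i+1}) ≠ 0 for every i ∈ {1,…,n−1} (including p₁(x₂) ≠ 0, etc., with the convention p₀(x₁)=1≠0). -/

import Mathlib

/-- The `(S,D)`-conjugate `a^c := S(c)·a·c⁻¹ + D(c)·c⁻¹`. -/
def sdConj {K : Type*} [DivisionRing K] (S : K →+* K) (D : K →+ K) (a c : K) : K :=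
  S c * a * c⁻¹ + D c * c⁻¹

/-- `R` together with `ι : K →+* R` and `t : R` is the skew polynomial ring `K[t;S,D]`:
the commutation rule `t·a = S(a)t + D(a)` holds and every element of `R` is uniquely a
polynomial `Σ ι(cᵢ)·tⁱ`. -/
def IsSkewPolyRing {K R : Type*} [DivisionRing K] [Ring R] (S : K →+* K) (D : K →+ K)
    (ι : K →+* R) (t : R) : Prop :=
  (∀ a : K, t * ι a = ι (S a) * t + ι (D a)) ∧
  (∀ r : R, ∃! c : ℕ →₀ K, r = c.sum fun i k => ι k * t ^ i)

/-- The coefficients of `r ∈ K[t;S,D]`. -/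
noncomputable def coeffs {K R : Type*} [DivisionRing K] [Ring R] {S : K →+* K} {D : K →+ K}
    {ι : K →+* R} {t : R} (h : IsSkewPolyRing S D ι t) (r : R) : ℕ →₀ K :=
  (h.2 r).choose

/-- The degree of `r ∈ K[t;S,D]` (with `deg 0 = 0`). -/
noncomputable def sdeg {K R : Type*} [DivisionRing K] [Ring R] {S : K →+* K} {D : K →+ K}
    {ι : K →+* R} {t : R} (h : IsSkewPolyRing S D ι t) (r : R) : ℕ :=
  (coeffs h r).support.sup id

/-- `r ∈ K[t;S,D]` is monic: its leading coefficient is `1`. -/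
noncomputable def SMonic {K R : Type*} [DivisionRing K] [Ring R] {S : K →+* K} {D : K →+ K}
    {ι : K →+* R} {t : R} (h : IsSkewPolyRing S D ι t) (r : R) : Prop :=
  coeffs h r (sdeg h r) = 1

namespace SkewAux

variable {K R : Type*} [DivisionRing K] [Ring R] {S : K →+* K} {D : K →+ K}
  {ι : K →+* R} {t : R} (h : IsSkewPolyRing S D ι t)

include h

theorem coeffs_spec (r : R) : r = (coeffs h r).sum fun i k => ι k * t ^ i :=
  (h.2 r).choose_spec.1

theorem coeffs_unique {r : R} {c : ℕ →₀ K} (hc : r = c.sum fun i k => ι k * t ^ i) :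
    coeffs h r = c :=
  ((h.2 r).choose_spec.2 c hc).symm

theorem coeffs_zero : coeffs h (0 : R) = 0 :=
  coeffs_unique h (by simp)

theorem coeffs_monomial (k : K) (i : ℕ) : coeffs h (ι k * t ^ i) = Finsupp.single i k :=
  coeffs_unique h (by rw [Finsupp.sum_single_index]; simp)

theorem coeffs_add (r₁ r₂ : R) : coeffs h (r₁ + r₂) = coeffs h r₁ + coeffs h r₂ :=
  coeffs_unique h (by
    rw [Finsupp.sum_add_index' (by simp) (by intro i b₁ b₂; rw [map_add, add_mul])]
    rw [← coeffs_spec h r₁, ← coeffs_spec h r₂])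

theorem coeffs_neg (r : R) : coeffs h (-r) = - coeffs h r := by
  have := coeffs_add h r (-r)
  simp only [add_neg_cancel, coeffs_zero h] at this
  exact (neg_eq_of_add_eq_zero_right this.symm).symm

theorem coeffs_sub (r₁ r₂ : R) : coeffs h (r₁ - r₂) = coeffs h r₁ - coeffs h r₂ := by
  rw [sub_eq_add_neg, sub_eq_add_neg, coeffs_add, coeffs_neg]

theorem eq_zero_of_coeffs_eq_zero {r : R} (hr : coeffs h r = 0) : r = 0 := by
  rw [coeffs_spec h r, hr]; simp

theorem coeffs_one : coeffs h (1 : R) = Finsupp.single 0 1 := by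
  have := coeffs_monomial h (1 : K) 0
  simpa using this

theorem nontrivialR : Nontrivial R := by
  refine ⟨1, 0, fun e => ?_⟩
  have h1 := coeffs_one h
  rw [e, coeffs_zero h] at h1
  have := Finsupp.single_eq_zero.mp h1.symm
  exact one_ne_zero this

theorem iota_inj : Function.Injective ι := by
  have := nontrivialR h
  exact ι.injective

theorem coeffs_iota (k : K) : coeffs h (ι k) = Finsupp.single 0 k := by
  have := coeffs_monomial h k 0
  simpa using this

/-- degree ≤ m (convention: also true for 0) -/
def DegLE (m : ℕ) (r : R) : Prop := ∀ i, m < i → coeffs h r i = 0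

theorem degLE_mono {m m' : ℕ} {r : R} (hm : m ≤ m') (hr : DegLE h m r) : DegLE h m' r :=
  fun i hi => hr i (lt_of_le_of_lt hm hi)

theorem degLE_zero (m : ℕ) : DegLE h m (0 : R) := fun i _ => by rw [coeffs_zero]; rfl

theorem degLE_add {m : ℕ} {r₁ r₂ : R} (h₁ : DegLE h m r₁) (h₂ : DegLE h m r₂) :
    DegLE h m (r₁ + r₂) := fun i hi => by
  rw [coeffs_add]; simp [h₁ i hi, h₂ i hi]

theorem degLE_monomial (k : K) (i : ℕ) : DegLE h i (ι k * t ^ i) := fun j hj => by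
  rw [coeffs_monomial, Finsupp.single_apply_eq_zero]
  intro e; omega

theorem degLE_sum {m : ℕ} {α : Type*} (s : Finset α) (f : α → R)
    (hf : ∀ a ∈ s, DegLE h m (f a)) : DegLE h m (∑ a ∈ s, f a) := by
  classical
  induction s using Finset.induction_on with
  | empty => simpa using degLE_zero h m
  | @insert a s' hni ih =>
    rw [Finset.sum_insert hni]
    exact degLE_add h (hf a (by simp)) (ih fun b hb => hf b (by simp [hb]))

theorem degLE_sdeg (r : R) : DegLE h (sdeg h r) r := fun i hi => by
  by_contra hne
  exact absurd (Finset.le_sup (f := id) (Finsupp.mem_support_iff.2 hne)) (by simpa [sdeg] using (not_le.mpr hi))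

theorem sdeg_le_of_degLE {m : ℕ} {r : R} (hr : DegLE h m r) : sdeg h r ≤ m := by
  refine Finset.sup_le fun i hi => ?_
  by_contra hlt
  exact Finsupp.mem_support_iff.1 hi (hr i (by simpa using hlt))

theorem lc_ne_zero {r : R} (hr : r ≠ 0) : coeffs h r (sdeg h r) ≠ 0 := by
  have hsupp : (coeffs h r).support.Nonempty := by
    rw [Finsupp.support_nonempty_iff]
    intro e; exact hr (eq_zero_of_coeffs_eq_zero h e)
  obtain ⟨a, ha, he⟩ := Finset.exists_mem_eq_sup _ hsupp id
  rw [sdeg, he]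
  exact Finsupp.mem_support_iff.1 ha

theorem coeffs_iota_mul (k : K) (r : R) (i : ℕ) :
    coeffs h (ι k * r) i = k * coeffs h r i := by
  have : coeffs h (ι k * r) = (coeffs h r).mapRange (k * ·) (by simp) := by
    refine coeffs_unique h ?_
    rw [Finsupp.sum_mapRange_index (by simp)]
    conv_lhs => rw [coeffs_spec h r]
    rw [Finsupp.mul_sum]
    refine Finset.sum_congr rfl fun j _ => by simp only [← mul_assoc, ← map_mul]
  rw [this, Finsupp.mapRange_apply]

/-- degree < m (so for m = 0 this means r = 0) -/
def DegLT (m : ℕ) (r : R) : Prop := ∀ i, m ≤ i → coeffs h r i = 0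

theorem degLT_mono {m m' : ℕ} {r : R} (hm : m ≤ m') (hr : DegLT h m r) : DegLT h m' r :=
  fun i hi => hr i (le_trans hm hi)

theorem degLT_zero (m : ℕ) : DegLT h m (0 : R) := fun i _ => by rw [coeffs_zero]; rfl

theorem degLT_add {m : ℕ} {r₁ r₂ : R} (h₁ : DegLT h m r₁) (h₂ : DegLT h m r₂) :
    DegLT h m (r₁ + r₂) := fun i hi => by
  rw [coeffs_add]; simp [h₁ i hi, h₂ i hi]

theorem degLT_of_degLE {m m' : ℕ} {r : R} (hr : DegLE h m r) (hm : m < m') : DegLT h m' r :=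
  fun i hi => hr i (lt_of_lt_of_le hm hi)

theorem degLE_of_degLT {m : ℕ} {r : R} (hr : DegLT h m r) : DegLE h m r :=
  fun i hi => hr i hi.le

theorem degLT_sum {m : ℕ} {α : Type*} (s : Finset α) (f : α → R)
    (hf : ∀ a ∈ s, DegLT h m (f a)) : DegLT h m (∑ a ∈ s, f a) := by
  classical
  induction s using Finset.induction_on with
  | empty => simpa using degLT_zero h m
  | @insert a s' hni ih =>
    rw [Finset.sum_insert hni]
    exact degLT_add h (hf a (by simp)) (ih fun b hb => hf b (by simp [hb]))

theorem degLT_iota_mul {m : ℕ} (k : K) {r : R} (hr : DegLT h m r) : DegLT h m (ι k * r) :=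
  fun i hi => by rw [coeffs_iota_mul, hr i hi, mul_zero]

theorem degLE_iota_mul {m : ℕ} (k : K) {r : R} (hr : DegLE h m r) : DegLE h m (ι k * r) :=
  fun i hi => by rw [coeffs_iota_mul, hr i hi, mul_zero]

theorem degLE_t_mul {m : ℕ} {r : R} (hr : DegLE h m r) : DegLE h (m + 1) (t * r) := by
  conv in t * r => rw [coeffs_spec h r]
  rw [Finsupp.sum, Finset.mul_sum]
  refine degLE_sum h _ _ fun i hi => ?_
  have him : i ≤ m := by
    by_contra hc
    exact Finsupp.mem_support_iff.1 hi (hr i (by omega))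
  have : t * (ι (coeffs h r i) * t ^ i)
      = ι (S (coeffs h r i)) * t ^ (i+1) + ι (D (coeffs h r i)) * t ^ i := by
    rw [← mul_assoc, h.1, add_mul, mul_assoc, ← pow_succ']
  rw [this]
  exact degLE_add h (degLE_mono h (by omega) (degLE_monomial h _ _))
    (degLE_mono h (by omega) (degLE_monomial h _ _))

theorem degLT_t_mul {m : ℕ} {r : R} (hr : DegLT h m r) : DegLT h (m + 1) (t * r) := by
  conv in t * r => rw [coeffs_spec h r]
  rw [Finsupp.sum, Finset.mul_sum]
  refine degLT_sum h _ _ fun i hi => ?_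
  have him : i < m := by
    by_contra hc
    exact Finsupp.mem_support_iff.1 hi (hr i (by omega))
  have : t * (ι (coeffs h r i) * t ^ i)
      = ι (S (coeffs h r i)) * t ^ (i+1) + ι (D (coeffs h r i)) * t ^ i := by
    rw [← mul_assoc, h.1, add_mul, mul_assoc, ← pow_succ']
  rw [this]
  refine degLT_add h (degLT_of_degLE h (degLE_monomial h _ _) (by omega))
    (degLT_of_degLE h (degLE_monomial h _ _) (by omega))

theorem degLE_t_pow_mul {m : ℕ} (i : ℕ) {r : R} (hr : DegLE h m r) :
    DegLE h (i + m) (t ^ i * r) := by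
  induction i with
  | zero => simpa using hr
  | succ i ih =>
    have : t ^ (i+1) * r = t * (t ^ i * r) := by rw [pow_succ', mul_assoc]
    rw [this]
    exact degLE_mono h (by omega) (degLE_t_mul h ih)

theorem degLT_t_pow_mul {m : ℕ} (i : ℕ) {r : R} (hr : DegLT h m r) :
    DegLT h (i + m) (t ^ i * r) := by
  induction i with
  | zero => simpa using hr
  | succ i ih =>
    have : t ^ (i+1) * r = t * (t ^ i * r) := by rw [pow_succ', mul_assoc]
    rw [this]
    exact degLT_mono h (by omega) (degLT_t_mul h ih)

theorem degLE_mul {p q : ℕ} {f g : R} (hf : DegLE h p f) (hg : DegLE h q g) :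
    DegLE h (p + q) (f * g) := by
  conv in f * g => rw [coeffs_spec h f]
  rw [Finsupp.sum, Finset.sum_mul]
  refine degLE_sum h _ _ fun i hi => ?_
  have him : i ≤ p := by
    by_contra hc
    exact Finsupp.mem_support_iff.1 hi (hf i (by omega))
  rw [mul_assoc]
  exact degLE_iota_mul h _ (degLE_mono h (by omega) (degLE_t_pow_mul h i hg))

theorem degLT_mul_degLE {p q : ℕ} {f g : R} (hf : DegLT h p f) (hg : DegLE h q g) :
    DegLT h (p + q) (f * g) := by
  conv in f * g => rw [coeffs_spec h f]
  rw [Finsupp.sum, Finset.sum_mul]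
  refine degLT_sum h _ _ fun i hi => ?_
  have him : i < p := by
    by_contra hc
    exact Finsupp.mem_support_iff.1 hi (hf i (by omega))
  rw [mul_assoc]
  exact degLT_iota_mul h _
    (degLT_of_degLE h (degLE_t_pow_mul h i hg) (by omega))

theorem coeffs_mul_t_pow (r : R) (q i : ℕ) :
    coeffs h (r * t ^ q) (i + q) = coeffs h r i := by
  have hemb : coeffs h (r * t ^ q) =
      Finsupp.embDomain ⟨fun i => i + q, fun a b e => by simpa using e⟩ (coeffs h r) := by
    refine coeffs_unique h ?_
    rw [Finsupp.sum_embDomain]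
    conv_lhs => rw [coeffs_spec h r]
    rw [Finsupp.sum, Finset.sum_mul]
    exact Finset.sum_congr rfl fun j _ => by simp only [mul_assoc, ← pow_add]; rfl
  rw [hemb]
  exact Finsupp.embDomain_apply_self _ _ i

theorem degLT_mul_t_pow {m : ℕ} {r : R} (hr : DegLT h m r) (q : ℕ) :
    DegLT h (m + q) (r * t ^ q) := by
  intro i hi
  obtain ⟨j, rfl⟩ : ∃ j, i = j + q := ⟨i - q, by omega⟩
  rw [coeffs_mul_t_pow]
  exact hr j (by omega)

theorem t_pow_mul_iota (m : ℕ) (b : K) :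
    ∃ e, DegLT h m e ∧ t ^ m * ι b = ι ((⇑S)^[m] b) * t ^ m + e := by
  induction m with
  | zero => exact ⟨0, degLT_zero h 0, by simp⟩
  | succ m ih =>
    obtain ⟨e, he, heq⟩ := ih
    refine ⟨ι (D ((⇑S)^[m] b)) * t ^ m + t * e, ?_, ?_⟩
    · exact degLT_add h (degLT_of_degLE h (degLE_monomial h _ _) (by omega))
        (degLT_t_mul h he)
    · have : t ^ (m+1) * ι b = t * (t ^ m * ι b) := by rw [pow_succ', mul_assoc]
      rw [this, heq, mul_add, ← mul_assoc, h.1, Function.iterate_succ_apply']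
      rw [add_mul, mul_assoc, ← pow_succ']
      noncomm_ring

theorem t_pow_mul (m : ℕ) (g : R) :
    ∃ e, DegLT h (m + sdeg h g) e ∧
      t ^ m * g = ι ((⇑S)^[m] (coeffs h g (sdeg h g))) * t ^ (m + sdeg h g) + e := by
  set q := sdeg h g
  set b := coeffs h g q
  have hg' : DegLT h q (g - ι b * t ^ q) := by
    intro i hi
    rw [coeffs_sub, coeffs_monomial]
    rcases eq_or_lt_of_le hi with hqi | hqi
    · simp [← hqi, Finsupp.single_eq_same, b]
    · have := degLE_sdeg h g i hqi
      rw [Finsupp.sub_apply, this, Finsupp.single_apply_eq_zero.2 (by omega)]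
      simp
  obtain ⟨e₀, he₀, heq₀⟩ := t_pow_mul_iota h m b
  refine ⟨e₀ * t ^ q + t ^ m * (g - ι b * t ^ q), ?_, ?_⟩
  · exact degLT_add h (degLT_mul_t_pow h he₀ q) (degLT_t_pow_mul h m hg')
  · have hg2 : ι b * t ^ q + (g - ι b * t ^ q) = g := by abel
    have : t ^ m * g = t ^ m * (ι b * t ^ q) + t ^ m * (g - ι b * t ^ q) := by
      rw [← mul_add, hg2]
    rw [this, ← mul_assoc, heq₀, add_mul, mul_assoc, ← pow_add, add_assoc]

theorem coeffs_mul_top (f g : R) :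
    coeffs h (f * g) (sdeg h f + sdeg h g)
      = coeffs h f (sdeg h f) * (⇑S)^[sdeg h f] (coeffs h g (sdeg h g)) := by
  set p := sdeg h f
  set q := sdeg h g
  set a := coeffs h f p
  set b := coeffs h g q
  have hf' : DegLT h p (f - ι a * t ^ p) := by
    intro i hi
    rw [coeffs_sub, coeffs_monomial]
    rcases eq_or_lt_of_le hi with hpi | hpi
    · simp [← hpi, Finsupp.single_eq_same, a]
    · have := degLE_sdeg h f i hpi
      rw [Finsupp.sub_apply, this, Finsupp.single_apply_eq_zero.2 (by omega)]
      simp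
  obtain ⟨e, he, heq⟩ := t_pow_mul h p g
  have hsplit : f * g = ι a * (t ^ p * g) + (f - ι a * t ^ p) * g := by noncomm_ring
  rw [hsplit, heq, mul_add, ← mul_assoc, ← map_mul, coeffs_add, coeffs_add]
  rw [Finsupp.add_apply, Finsupp.add_apply, coeffs_monomial, Finsupp.single_eq_same]
  rw [coeffs_iota_mul, he (p + q) le_rfl, mul_zero]
  rw [degLT_mul_degLE h hf' (degLE_sdeg h g) (p + q) le_rfl]
  simp
  exact Or.inl rfl

theorem S_iter_inj (m : ℕ) : Function.Injective ((⇑S)^[m]) := by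
  have := nontrivialR h
  exact Function.Injective.iterate S.injective m

theorem mul_ne_zero' {f g : R} (hf : f ≠ 0) (hg : g ≠ 0) : f * g ≠ 0 := by
  intro e
  have htop := coeffs_mul_top h f g
  rw [e, coeffs_zero h] at htop
  have hb : (⇑S)^[sdeg h f] (coeffs h g (sdeg h g)) ≠ 0 := by
    intro e'
    exact lc_ne_zero h hg (S_iter_inj h _ (by simpa using e'))
  exact mul_ne_zero (lc_ne_zero h hf) hb (by simpa using htop.symm)

theorem sdeg_mul {f g : R} (hf : f ≠ 0) (hg : g ≠ 0) :
    sdeg h (f * g) = sdeg h f + sdeg h g := by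
  have htop := coeffs_mul_top h f g
  have hne : coeffs h (f * g) (sdeg h f + sdeg h g) ≠ 0 := by
    rw [htop]
    refine mul_ne_zero (lc_ne_zero h hf) fun e' => ?_
    exact lc_ne_zero h hg (S_iter_inj h _ (by simpa using e'))
  refine le_antisymm (sdeg_le_of_degLE h (degLE_mul h (degLE_sdeg h f) (degLE_sdeg h g))) ?_
  exact Finset.le_sup (f := id) (Finsupp.mem_support_iff.2 hne)

theorem sdeg_iota (k : K) : sdeg h (ι k) = 0 :=
  Nat.le_zero.1 (sdeg_le_of_degLE h fun i hi => by
    rw [coeffs_iota h, Finsupp.single_apply_eq_zero.2 (fun e => absurd e (by omega))])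

theorem sdeg_one : sdeg h (1 : R) = 0 := by
  have := sdeg_iota h (1 : K)
  rwa [map_one] at this

theorem smonic_ne_zero {r : R} (hr : SMonic h r) : r ≠ 0 := by
  intro e
  rw [SMonic, e, coeffs_zero h] at hr
  simpa using hr

theorem eq_iota_of_sdeg_eq_zero {r : R} (hr : sdeg h r = 0) : r = ι (coeffs h r 0) := by
  have hc : coeffs h r = Finsupp.single 0 (coeffs h r 0) := by
    ext i
    cases i with
    | zero => simp
    | succ i =>
      rw [degLE_sdeg h r (i+1) (by omega), Finsupp.single_apply_eq_zero.2
        (fun e => absurd e (by omega))]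
  conv_lhs => rw [coeffs_spec h r, hc]
  rw [Finsupp.sum_single_index (by simp)]
  simp

theorem coeffs_t_sub_iota (a : K) : coeffs h (t - ι a) = Finsupp.single 1 1 - Finsupp.single 0 a := by
  have ht : coeffs h t = Finsupp.single 1 1 := by
    have := coeffs_monomial h (1 : K) 1
    simpa using this
  rw [coeffs_sub, ht, coeffs_iota]

theorem sdeg_t_sub_iota (a : K) : sdeg h (t - ι a) = 1 := by
  refine le_antisymm (sdeg_le_of_degLE h fun i hi => ?_) ?_
  · rw [coeffs_t_sub_iota, Finsupp.sub_apply,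
      Finsupp.single_apply_eq_zero.2 (fun e => absurd e (by omega)),
      Finsupp.single_apply_eq_zero.2 (fun e => absurd e (by omega)), sub_zero]
  · refine Finset.le_sup (f := id) (Finsupp.mem_support_iff.2 ?_)
    rw [coeffs_t_sub_iota, Finsupp.sub_apply, Finsupp.single_eq_same,
      Finsupp.single_apply_eq_zero.2 (fun e => absurd e (by omega)), sub_zero]
    exact one_ne_zero

theorem smonic_t_sub_iota (a : K) : SMonic h (t - ι a) := by
  rw [SMonic, sdeg_t_sub_iota, coeffs_t_sub_iota, Finsupp.sub_apply,
    Finsupp.single_eq_same, Finsupp.single_apply_eq_zero.2 (fun e => absurd e (by omega)),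
    sub_zero]

omit h in
theorem mem_span_singleton'' {g y : R} : y ∈ Ideal.span {g} ↔ ∃ u, u * g = y := by
  rw [Ideal.span, Submodule.mem_span_singleton]
  simp [smul_eq_mul]

theorem smonic_eq_of_span_eq {f g : R} (hf : SMonic h f) (hg : SMonic h g)
    (hs : Ideal.span {f} = Ideal.span {g}) : f = g := by
  have hf0 := smonic_ne_zero h hf
  have hg0 := smonic_ne_zero h hg
  obtain ⟨u, hu⟩ : ∃ u, u * g = f := mem_span_singleton''.1 (hs ▸ Ideal.subset_span rfl)
  obtain ⟨v, hv⟩ : ∃ v, v * f = g := mem_span_singleton''.1 (hs ▸ Ideal.subset_span rfl)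
  have hu0 : u ≠ 0 := fun e => hf0 (by rw [← hu, e, zero_mul])
  have hv0 : v ≠ 0 := fun e => hg0 (by rw [← hv, e, zero_mul])
  have hdu : sdeg h f = sdeg h u + sdeg h g := by rw [← hu, sdeg_mul h hu0 hg0]
  have hdv : sdeg h g = sdeg h v + sdeg h f := by rw [← hv, sdeg_mul h hv0 hf0]
  have hu00 : sdeg h u = 0 := by omega
  have hk : u = ι (coeffs h u 0) := eq_iota_of_sdeg_eq_zero h hu00
  have hfg : sdeg h f = sdeg h g := by omega
  have hthis : coeffs h f (sdeg h g) = coeffs h u 0 * coeffs h g (sdeg h g) := by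
    conv_lhs => rw [← hu, hk]
    rw [coeffs_iota_mul]
  rw [SMonic, hfg] at hf
  rw [hf, hg, mul_one] at hthis
  rw [← hu, hk, ← hthis, map_one, one_mul]

/-- iterated "power function" `N_m(a)`: remainder of `t^m` mod `t - a`. -/
noncomputable def Npow (S : K →+* K) (D : K →+ K) (a : K) : ℕ → K
  | 0 => 1
  | m+1 => S (Npow S D a m) * a + D (Npow S D a m)

theorem t_pow_sub_mem (a : K) (m : ℕ) :
    t ^ m - ι (Npow S D a m) ∈ Ideal.span {t - ι a} := by
  induction m with
  | zero => simp [Npow]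
  | succ m ih =>
    have hsplit : t ^ (m+1) - ι (Npow S D a (m+1))
        = t * (t ^ m - ι (Npow S D a m)) + (t * ι (Npow S D a m) - ι (Npow S D a (m+1))) := by
      rw [pow_succ']
      noncomm_ring
    rw [hsplit]
    refine add_mem (Ideal.mul_mem_left _ t ih) ?_
    have h2 : t * ι (Npow S D a m) - ι (Npow S D a (m+1))
        = ι (S (Npow S D a m)) * (t - ι a) := by
      rw [h.1, Npow, map_add, map_mul, mul_sub]
      noncomm_ring
    rw [h2]
    exact Ideal.mul_mem_left _ _ (Ideal.subset_span rfl)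

theorem exists_rem (r : R) (a : K) : ∃ c : K, r - ι c ∈ Ideal.span {t - ι a} := by
  refine ⟨(coeffs h r).sum fun i k => k * Npow S D a i, ?_⟩
  have hiota : ι ((coeffs h r).sum fun i k => k * Npow S D a i)
      = ∑ i ∈ (coeffs h r).support, ι (coeffs h r i * Npow S D a i) := by
    rw [Finsupp.sum, map_sum]
  have hre : r - ι ((coeffs h r).sum fun i k => k * Npow S D a i)
      = ∑ i ∈ (coeffs h r).support,
          (ι (coeffs h r i) * t ^ i - ι (coeffs h r i * Npow S D a i)) := by
    nth_rewrite 1 [coeffs_spec h r]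
    rw [Finsupp.sum, hiota, ← Finset.sum_sub_distrib]
  rw [hre]
  refine Submodule.sum_mem _ fun i _ => ?_
  have : ι (coeffs h r i) * t ^ i - ι (coeffs h r i * Npow S D a i)
      = ι (coeffs h r i) * (t ^ i - ι (Npow S D a i)) := by
    rw [map_mul, mul_sub]
  rw [this]
  exact Ideal.mul_mem_left _ _ (t_pow_sub_mem h a i)

theorem eq_zero_of_iota_mem_span {a c : K} (hm : ι c ∈ Ideal.span {t - ι a}) : c = 0 := by
  obtain ⟨u, hu⟩ := mem_span_singleton''.1 hm
  by_contra hc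
  rcases eq_or_ne u 0 with hu0 | hu0
  · rw [hu0, zero_mul] at hu
    exact hc (iota_inj h (by rw [← hu, map_zero]))
  · have hta : (t - ι a) ≠ 0 := smonic_ne_zero h (smonic_t_sub_iota h a)
    have hd : sdeg h (ι c) = sdeg h u + 1 := by
      rw [← hu, sdeg_mul h hu0 hta, sdeg_t_sub_iota]
    rw [sdeg_iota h] at hd
    omega

theorem conj_mul_mem {a c : K} (hc : c ≠ 0) {r : R}
    (hr : r - ι c ∈ Ideal.span {t - ι a}) :
    (t - ι (sdConj S D a c)) * r ∈ Ideal.span {t - ι a} := by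
  have hsplit : (t - ι (sdConj S D a c)) * r
      = (t - ι (sdConj S D a c)) * (r - ι c) + (t - ι (sdConj S D a c)) * ι c := by
    noncomm_ring
  rw [hsplit]
  refine add_mem (Ideal.mul_mem_left _ _ hr) ?_
  have hbc : sdConj S D a c * c = S c * a + D c := by
    simp [sdConj, add_mul, mul_assoc, inv_mul_cancel₀ hc]
  have h2 : (t - ι (sdConj S D a c)) * ι c = ι (S c) * (t - ι a) := by
    rw [sub_mul, h.1, ← map_mul, hbc, map_add, map_mul, mul_sub]
    noncomm_ring
  rw [h2]
  exact Ideal.mul_mem_left _ _ (Ideal.subset_span rfl)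

theorem eq_of_smonic_mul {q P P' : R} (hP : SMonic h P) (hP' : SMonic h P')
    (heq : q * P = P') (hq : sdeg h q = 0) : P' = P := by
  have hP0 := smonic_ne_zero h hP
  have hP'0 := smonic_ne_zero h hP'
  have hq0 : q ≠ 0 := fun e => hP'0 (by rw [← heq, e, zero_mul])
  have hk : q = ι (coeffs h q 0) := eq_iota_of_sdeg_eq_zero h hq
  have hdeg : sdeg h P' = sdeg h P := by
    rw [← heq, sdeg_mul h hq0 hP0, hq, zero_add]
  have hthis : coeffs h P' (sdeg h P) = coeffs h q 0 * coeffs h P (sdeg h P) := by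
    conv_lhs => rw [← heq, hk]
    rw [coeffs_iota_mul]
  rw [SMonic, hdeg] at hP'
  rw [hP', hP, mul_one] at hthis
  rw [← heq, hk, ← hthis, map_one, one_mul]

theorem step {P P' : R} (a : K) (hPm : SMonic h P) (hP'm : SMonic h P')
    (hsp : Ideal.span {P'} = Ideal.span {P} ⊓ Ideal.span {t - ι a}) :
    (P ∈ Ideal.span {t - ι a} → sdeg h P' = sdeg h P) ∧
    (P ∉ Ideal.span {t - ι a} → sdeg h P' = sdeg h P + 1) := by
  have hP0 := smonic_ne_zero h hPm
  have hP'0 := smonic_ne_zero h hP'm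
  constructor
  · intro hmem
    have hle : Ideal.span {P} ≤ Ideal.span {t - ι a} :=
      Ideal.span_le.2 (Set.singleton_subset_iff.2 hmem)
    have : Ideal.span {P'} = Ideal.span {P} := by rw [hsp, inf_eq_left.2 hle]
    rw [smonic_eq_of_span_eq h hP'm hPm this]
  · intro hmem
    have hP'P : P' ∈ Ideal.span {P} := by
      have : P' ∈ Ideal.span {P'} := Ideal.subset_span rfl
      rw [hsp] at this
      exact this.1
    have hP'a : P' ∈ Ideal.span {t - ι a} := by
      have : P' ∈ Ideal.span {P'} := Ideal.subset_span rfl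
      rw [hsp] at this
      exact this.2
    obtain ⟨q, hq⟩ := mem_span_singleton''.1 hP'P
    have hq0 : q ≠ 0 := fun e => hP'0 (by rw [← hq, e, zero_mul])
    obtain ⟨c, hcmem⟩ := exists_rem h P a
    have hc0 : c ≠ 0 := by
      intro e
      rw [e, map_zero, sub_zero] at hcmem
      exact hmem hcmem
    set b := sdConj S D a c with hb
    have hmem1 : (t - ι b) * P ∈ Ideal.span {t - ι a} := conj_mul_mem h hc0 hcmem
    have hmem2 : (t - ι b) * P ∈ Ideal.span {P} := mem_span_singleton''.2 ⟨_, rfl⟩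
    have hmemP' : (t - ι b) * P ∈ Ideal.span {P'} := by
      rw [hsp]; exact ⟨hmem2, hmem1⟩
    obtain ⟨u, hu⟩ := mem_span_singleton''.1 hmemP'
    have htb0 : (t - ι b) ≠ 0 := smonic_ne_zero h (smonic_t_sub_iota h b)
    have htbP0 : (t - ι b) * P ≠ 0 := mul_ne_zero' h htb0 hP0
    have hu0 : u ≠ 0 := fun e => htbP0 (by rw [← hu, e, zero_mul])
    have hd1 : sdeg h ((t - ι b) * P) = 1 + sdeg h P := by
      rw [sdeg_mul h htb0 hP0, sdeg_t_sub_iota]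
    have hd2 : sdeg h ((t - ι b) * P) = sdeg h u + sdeg h P' := by
      rw [← hu, sdeg_mul h hu0 hP'0]
    have hd3 : sdeg h P' = sdeg h q + sdeg h P := by
      rw [← hq, sdeg_mul h hq0 hP0]
    have hq1 : sdeg h q ≠ 0 := by
      intro e
      have := eq_of_smonic_mul h hPm hP'm hq e
      rw [this] at hP'a
      exact hmem hP'a
    omega

end SkewAux

/-- P-independence via iterated llcm: with `pⱼ` the monic llcm of `t−x₁,…,t−xⱼ`
(`p₀ = 1`), one has `deg pₙ = n` iff `pᵢ(x_{i+1}) ≠ 0` (i.e. `pᵢ ∉ R(t−x_{i+1})`) for all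
`0 ≤ i < n` (here `x` is `0`-indexed: `x i` is `x_{i+1}`). -/
theorem p_independent_iff_eval_ne_zero {K R : Type*} [DivisionRing K] [Ring R]
    (S : K →+* K) (D : K →+ K)
    (hD : ∀ a b : K, D (a * b) = S a * D b + D a * b)
    (ι : K →+* R) (t : R) (h : IsSkewPolyRing S D ι t)
    (n : ℕ) (x : Fin n → K) (p : ℕ → R)
    (hp0 : p 0 = 1)
    (hmonic : ∀ j ≤ n, SMonic h (p j))
    (hspan : ∀ j ≤ n, Ideal.span {p j} =
      ⨅ i : Fin n, ⨅ _ : (i : ℕ) < j, Ideal.span {t - ι (x i)}) :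
    sdeg h (p n) = n ↔ ∀ i : Fin n, p i ∉ Ideal.span {t - ι (x i)} := by
  classical
  have hkey : ∀ (j : ℕ) (hj : j < n),
      Ideal.span {p (j+1)} = Ideal.span {p j} ⊓ Ideal.span {t - ι (x ⟨j, hj⟩)} := by
    intro j hj
    rw [hspan (j+1) hj, hspan j hj.le]
    ext r
    simp only [Submodule.mem_inf, Submodule.mem_iInf]
    constructor
    · intro hr
      exact ⟨fun i hi => hr i (by omega), hr ⟨j, hj⟩ (by simp)⟩
    · rintro ⟨h1, h2⟩ i hi
      rcases lt_or_eq_of_le (Nat.lt_succ_iff.1 hi) with hlt | heq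
      · exact h1 i hlt
      · have he : i = ⟨j, hj⟩ := Fin.ext heq
        rw [he]; exact h2
  have hdeg : ∀ j ≤ n, sdeg h (p j) ≤ j ∧
      (sdeg h (p j) = j ↔ ∀ i : Fin n, (i : ℕ) < j → p i ∉ Ideal.span {t - ι (x i)}) := by
    intro j
    induction j with
    | zero =>
      intro _
      have h0 : sdeg h (p 0) = 0 := by rw [hp0, SkewAux.sdeg_one h]
      refine ⟨by omega, ?_⟩
      simp [h0]
    | succ j ih =>
      intro hj1
      have hj : j < n := hj1
      obtain ⟨ihle, ihiff⟩ := ih (Nat.le_of_succ_le hj1)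
      have hstep := SkewAux.step h (x ⟨j, hj⟩) (hmonic j (by omega)) (hmonic (j+1) hj1)
        (hkey j hj)
      by_cases hmem : p j ∈ Ideal.span {t - ι (x ⟨j, hj⟩)}
      · have hd := hstep.1 hmem
        refine ⟨by omega, ?_, ?_⟩
        · intro e; omega
        · intro hall
          exact absurd hmem (hall ⟨j, hj⟩ (by simp))
      · have hd := hstep.2 hmem
        refine ⟨by omega, ?_, ?_⟩
        · intro e i hi
          rcases lt_or_eq_of_le (Nat.lt_succ_iff.1 hi) with hlt | heq
          · exact ihiff.1 (by omega) i hlt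
          · have he : i = ⟨j, hj⟩ := Fin.ext heq
            rw [he]; exact hmem
        · intro hall
          have := ihiff.2 fun i hi => hall i (by omega)
          omega
  rw [(hdeg n le_rfl).2]
  exact ⟨fun hall i => hall i i.isLt, fun hall i _ => hall i⟩
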